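/- Let G be a vertex-critical 9-chromatic graph, x a vertex of G, and A an independent set in G[N(x)] with |A| ≥ d(x) − 6. If the graph G* obtained from G by contracting A ∪ {x} to a single vertex is 8-colorable, then G is 8-colorable (a contradiction with χ(G) = 9). -/

import Mathlib

open SimpleGraph Set

attribute [local instance] Classical.propDecidable

/-- The chromatic number of a graph as a natural number. -/
noncomputable def chromNum {V : Type*} (G : SimpleGraph V) : ℕ := sInf {n | G.Colorable n}

/-- A set of vertices is independent if its elements are pairwise non-adjacent. -/
def IsIndepSet {V : Type*} (G : SimpleGraph V) (A : Set V) : Prop := Gᶜ.IsClique A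

/-- The independence number of a graph: the clique number of the complement. -/
noncomputable def indepNum {V : Type*} (G : SimpleGraph V) [Fintype V] : ℕ := Gᶜ.cliqueNum

/-- A vertex is bisimplicial if its neighborhood is the union of two cliques. -/
def Bisimplicial {V : Type*} (G : SimpleGraph V) (x : V) : Prop :=
  ∃ A B : Set V, G.IsClique A ∧ G.IsClique B ∧ G.neighborSet x = A ∪ B

/-- `G` has a `K_k` minor: there are `k` pairwise disjoint connected branch sets,
pairwise joined by an edge. -/
def HasKMinor {V : Type*} (G : SimpleGraph V) (k : ℕ) : Prop :=
  ∃ f : Fin k → Set V,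
    (Pairwise fun i j => Disjoint (f i) (f j)) ∧
    (∀ i, (G.induce (f i)).Connected) ∧
    (∀ i j, i ≠ j → ∃ u ∈ f i, ∃ v ∈ f j, G.Adj u v)

/-- A graph has an even hole if some even cycle of length at least 4 embeds in it
as an induced subgraph. -/
def HasEvenHole {V : Type*} (G : SimpleGraph V) : Prop :=
  ∃ n : ℕ, 4 ≤ n ∧ Even n ∧ Nonempty (cycleGraph n ↪g G)

/-- A graph is even-hole-free if it has no even hole. -/
def EvenHoleFree {V : Type*} (G : SimpleGraph V) : Prop := ¬ HasEvenHole G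

/-- The graph obtained from `G` by contracting the set `B` to a single new
vertex, adjacent to every vertex outside `B` having a neighbor in `B`. -/
def contractSet {V : Type*} (G : SimpleGraph V) (B : Set V) :
    SimpleGraph ({y : V // y ∉ B} ⊕ Unit) :=
  SimpleGraph.fromRel fun u w =>
    match u, w with
    | Sum.inl a, Sum.inl b => G.Adj a.1 b.1
    | Sum.inl a, Sum.inr _ => ∃ z ∈ B, G.Adj a.1 z
    | _, _ => False

/-- If `G` is vertex-critical with `χ(G) = 9`, `A` is an independent set of
neighbors of `x` with `|A| ≥ d(x) − 6`, and the graph obtained by contracting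
`A ∪ {x}` to a single vertex is 8-colorable, then `G` is 8-colorable. -/
theorem stmt_19 {V : Type*} [Fintype V] (G : SimpleGraph V) (x : V)
    (hχ : chromNum G = 9)
    (hcrit : ∀ v : V, chromNum (G.induce {v}ᶜ) < chromNum G)
    (A : Set V) (hA : A ⊆ G.neighborSet x) (hind : _root_.IsIndepSet G A)
    (hcard : G.degree x - 6 ≤ A.ncard)
    (hcol : (contractSet G (A ∪ {x})).Colorable 8) :
    G.Colorable 8 := by
  classical
  obtain ⟨c⟩ := hcol
  set B : Set V := A ∪ {x} with hB
  have hxA : x ∉ A := fun h => G.irrefl (hA h)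
  -- bound on neighbors outside A
  have hfin : (G.neighborSet x \ A).Finite := Set.toFinite _
  have hNfin : (G.neighborSet x).Finite := Set.toFinite _
  have hdeg : (G.neighborSet x).ncard = G.degree x := by
    rw [← Nat.card_coe_set_eq, Nat.card_eq_fintype_card, G.card_neighborSet_eq_degree]
  have hdiff : (G.neighborSet x \ A).ncard ≤ 6 := by
    have h1 : (G.neighborSet x \ A).ncard = (G.neighborSet x).ncard - A.ncard :=
      Set.ncard_diff hA
    rw [h1, hdeg]
    omega
  -- the set of forbidden colors for x
  let g : V → Fin 8 := fun y => if h : y ∉ B then c (Sum.inl ⟨y, h⟩) else c (Sum.inr ())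
  let S : Finset (Fin 8) := insert (c (Sum.inr ())) (hfin.toFinset.image g)
  have hScard : S.card < 8 := by
    have h2 : hfin.toFinset.card = (G.neighborSet x \ A).ncard :=
      (Set.ncard_eq_toFinset_card _ hfin).symm
    calc S.card ≤ (hfin.toFinset.image g).card + 1 := Finset.card_insert_le _ _
      _ ≤ hfin.toFinset.card + 1 := by
          exact Nat.add_le_add_right (Finset.card_image_le) 1
      _ < 8 := by omega
  obtain ⟨cx, hcx⟩ : ∃ a : Fin 8, a ∉ S := by
    by_contra h
    push_neg at h
    have : S = Finset.univ := Finset.eq_univ_iff_forall.mpr h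
    rw [this, Finset.card_univ, Fintype.card_fin] at hScard
    omega
  -- g of a neighbor of x is in S
  have hgS : ∀ v ∈ G.neighborSet x, g v ∈ S := by
    intro v hv
    by_cases hvA : v ∈ A
    · have hvB : v ∈ B := Or.inl hvA
      have : g v = c (Sum.inr ()) := by simp [g, hvB]
      rw [this]; exact Finset.mem_insert_self _ _
    · exact Finset.mem_insert_of_mem
        (Finset.mem_image_of_mem g (hfin.mem_toFinset.mpr ⟨hv, hvA⟩))
  -- adjacency in the contracted graph for needed cases
  have hadj1 : ∀ (u v : V) (hu : u ∉ B) (hv : v ∉ B), G.Adj u v →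
      (contractSet G B).Adj (Sum.inl ⟨u, hu⟩) (Sum.inl ⟨v, hv⟩) := by
    intro u v hu hv huv
    refine ⟨by simp [huv.ne], Or.inl huv⟩
  have hadj2 : ∀ (u : V) (hu : u ∉ B) (z : V), z ∈ B → G.Adj u z →
      (contractSet G B).Adj (Sum.inl ⟨u, hu⟩) (Sum.inr ()) := by
    intro u hu z hz huz
    exact ⟨by simp, Or.inl ⟨z, hz, huz⟩⟩
  -- colors differ along edges not involving x
  have hgvalid : ∀ u v : V, u ≠ x → v ≠ x → G.Adj u v → g u ≠ g v := by
    intro u v hux hvx huv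
    by_cases hu : u ∈ A
    · by_cases hv : v ∈ A
      · exact absurd huv ((hind hu hv huv.ne).2 : ¬ G.Adj u v).elim
      · have hvB : v ∉ B := by simp [hB, hv, hvx]
        have huB : u ∈ B := Or.inl hu
        have h := c.valid (hadj2 v hvB u huB huv.symm)
        simp only [g, dif_pos hvB, dif_neg (not_not_intro huB)]
        exact fun h' => h (h'.symm)
    · have huB : u ∉ B := by simp [hB, hu, hux]
      by_cases hv : v ∈ A
      · have hvB : v ∈ B := Or.inl hv
        have h := c.valid (hadj2 u huB v hvB huv)
        simp only [g, dif_pos huB, dif_neg (not_not_intro hvB)]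
        exact h
      · have hvB : v ∉ B := by simp [hB, hv, hvx]
        have h := c.valid (hadj1 u v huB hvB huv)
        simp only [g, dif_pos huB, dif_pos hvB]
        exact h
  -- the final coloring
  let f : V → Fin 8 := fun y => if y = x then cx else g y
  refine ⟨SimpleGraph.Coloring.mk f ?_⟩
  intro u v huv
  by_cases hux : u = x
  · have hvx : v ≠ x := by
      rintro rfl
      rw [hux] at huv
      exact G.irrefl huv
    have hv' : v ∈ G.neighborSet x := by rw [← hux]; exact huv
    simp only [f, if_pos hux, if_neg hvx]
    intro h
    exact hcx (h ▸ hgS v hv')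
  · by_cases hvx : v = x
    · have hu' : u ∈ G.neighborSet x := by rw [← hvx]; exact huv.symm
      simp only [f, if_pos hvx, if_neg hux]
      intro h
      exact hcx (h ▸ hgS u hu')
    · simp only [f, if_neg hux, if_neg hvx]
      exact hgvalid u v hux hvx huv
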